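/- Let n ≥ 1, let m = n + 2, and let Δ be the standard (n+1)-dimensional simplex, the convex hull of the standard basis e₁, …, e_m of ℝ^m; for a nonempty set I ⊆ {1, …, m} let Δ_I denote the convex hull of {e_i : i ∈ I}, i.e., the face of Δ consisting of points whose coordinates vanish outside I. Let X be a topological space and let (P_I), indexed by the nonempty subsets I ⊆ {1, …, m}, be a family of subsets of X such that P_{{1,…,m}} = X, each P_I is nonempty and contractible as a topological subspace, and P_{I∖{i}} ⊆ P_I whenever i ∈ I and I∖{i} ≠ ∅. Then there exists a continuous map f : Δ → X such that f(Δ_I) ⊆ P_I for every nonempty I ⊆ {1, …, m}. -/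

import Mathlib

open Set Finset

set_option linter.unusedSectionVars false

variable {ι : Type*} [Fintype ι] [DecidableEq ι]

/-- The support of a point as a finset. -/
noncomputable def suppF (x : ι → ℝ) : Finset ι := Finset.univ.filter (fun i => x i ≠ 0)

/-- The face of the standard simplex spanned by vertices in `I`. -/
def faceSet (I : Finset ι) : Set (ι → ℝ) :=
  {x | x ∈ stdSimplex ℝ ι ∧ ∀ i ∉ I, x i = 0}

lemma mem_suppF {x : ι → ℝ} {i : ι} : i ∈ suppF x ↔ x i ≠ 0 := by
  simp [suppF]

lemma suppF_subset_iff {x : ι → ℝ} {I : Finset ι} :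
    suppF x ⊆ I ↔ ∀ i ∉ I, x i = 0 := by
  constructor
  · intro h i hi
    by_contra hxi
    exact hi (h (mem_suppF.mpr hxi))
  · intro h i hi
    rw [mem_suppF] at hi
    by_contra hiI
    exact hi (h i hiI)

lemma mem_faceSet_iff {x : ι → ℝ} {I : Finset ι} :
    x ∈ faceSet I ↔ x ∈ stdSimplex ℝ ι ∧ suppF x ⊆ I := by
  rw [faceSet, mem_setOf_eq, suppF_subset_iff]

lemma isClosed_faceSet (I : Finset ι) : IsClosed (faceSet I) := by
  have : faceSet I = stdSimplex ℝ ι ∩ ⋂ i ∈ (Iᶜ : Finset ι), {x : ι → ℝ | x i = 0} := by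
    ext x
    simp only [faceSet, Set.mem_setOf_eq, Set.mem_inter_iff, Set.mem_iInter,
      Finset.mem_compl]
  rw [this]
  refine (isClosed_stdSimplex ℝ ι).inter ?_
  exact isClosed_biInter fun i _ => isClosed_eq (continuous_apply i) continuous_const

lemma faceSet_sum_eq_one {x : ι → ℝ} {I : Finset ι} (hx : x ∈ faceSet I) :
    ∑ i ∈ I, x i = 1 := by
  rw [← hx.1.2]
  exact Finset.sum_subset I.subset_univ (fun i _ hi => hx.2 i hi)

lemma suppF_nonempty {x : ι → ℝ} (hx : x ∈ stdSimplex ℝ ι) : (suppF x).Nonempty := by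
  by_contra h
  rw [Finset.not_nonempty_iff_eq_empty] at h
  have : ∀ i ∉ (∅ : Finset ι), x i = 0 := suppF_subset_iff.mp (by simp [h])
  have h1 := hx.2
  rw [Finset.sum_eq_zero (fun i _ => this i (Finset.notMem_empty i))] at h1
  norm_num at h1

lemma mem_faceSet_suppF {x : ι → ℝ} (hx : x ∈ stdSimplex ℝ ι) : x ∈ faceSet (suppF x) :=
  mem_faceSet_iff.mpr ⟨hx, le_refl _⟩

/-- Gluing continuity on a finite union of closed sets. -/
lemma continuousOn_union_of_isClosed {β γ : Type*} [TopologicalSpace β] [TopologicalSpace γ]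
    {f : β → γ} {s t : Set β} (hs : IsClosed s) (ht : IsClosed t)
    (hfs : ContinuousOn f s) (hft : ContinuousOn f t) : ContinuousOn f (s ∪ t) := by
  intro x hx
  refine ContinuousWithinAt.union ?_ ?_
  · by_cases h : x ∈ s
    · exact hfs x h
    · exact continuousWithinAt_of_notMem_closure (by rwa [hs.closure_eq])
  · by_cases h : x ∈ t
    · exact hft x h
    · exact continuousWithinAt_of_notMem_closure (by rwa [ht.closure_eq])

lemma continuousOn_finset_biUnion {α β γ : Type*} [TopologicalSpace β] [TopologicalSpace γ]
    (s : Finset α) (F : α → Set β) (f : β → γ) (hcl : ∀ a ∈ s, IsClosed (F a))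
    (hc : ∀ a ∈ s, ContinuousOn f (F a)) : ContinuousOn f (⋃ a ∈ s, F a) := by
  classical
  induction s using Finset.induction with
  | empty => simp
  | @insert a s' ha ih =>
    rw [Finset.set_biUnion_insert]
    exact continuousOn_union_of_isClosed (hcl a (mem_insert_self a s'))
      (isClosed_biUnion_finset fun b hb => hcl b (mem_insert_of_mem hb))
      (hc a (mem_insert_self a s'))
      (ih (fun b hb => hcl b (mem_insert_of_mem hb)) (fun b hb => hc b (mem_insert_of_mem hb)))

/-- Continuity on a finite set in a T1 space. -/
lemma continuousOn_of_finite {β γ : Type*} [TopologicalSpace β] [TopologicalSpace γ] [T1Space β]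
    {f : β → γ} {s : Set β} (hs : s.Finite) : ContinuousOn f s := by
  intro x hx
  have hcl : IsClosed (s \ {x}) := (hs.subset diff_subset).isClosed
  have hU : (s \ {x})ᶜ ∈ nhds x := hcl.isOpen_compl.mem_nhds (by simp)
  have : nhdsWithin x s = nhdsWithin x (s ∩ (s \ {x})ᶜ) := (nhdsWithin_inter_of_mem' (mem_nhdsWithin_of_mem_nhds hU)).symm
  have hsub : s ∩ (s \ {x})ᶜ ⊆ {x} := by
    intro y hy
    simp only [mem_inter_iff, mem_compl_iff, mem_diff, mem_singleton_iff, not_and, not_not] at hy ⊢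
    exact hy.2 hy.1
  rw [ContinuousWithinAt, this]
  refine Filter.Tendsto.mono_left ?_ (nhdsWithin_mono x hsub)
  rw [nhdsWithin_singleton]
  exact tendsto_pure_nhds f x

lemma faceSet_subset_stdSimplex (I : Finset ι) : faceSet I ⊆ stdSimplex ℝ ι := fun _ hx => hx.1

lemma faceSet_mono {I J : Finset ι} (h : I ⊆ J) : faceSet I ⊆ faceSet J := by
  intro x hx
  rw [mem_faceSet_iff] at hx ⊢
  exact ⟨hx.1, hx.2.trans h⟩

/-- The boundary of the face spanned by `I`. -/
def bnd (I : Finset ι) : Set (ι → ℝ) := ⋃ i ∈ I, faceSet (I.erase i)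

lemma isClosed_bnd (I : Finset ι) : IsClosed (bnd I) :=
  isClosed_biUnion_finset fun i _ => isClosed_faceSet _

lemma bnd_subset_faceSet (I : Finset ι) : bnd I ⊆ faceSet I := by
  intro x hx
  rw [bnd, Set.mem_iUnion₂] at hx
  obtain ⟨i, _, hx⟩ := hx
  exact faceSet_mono (I.erase_subset i) hx

lemma isCompact_bnd (I : Finset ι) : IsCompact (bnd I) :=
  (isCompact_stdSimplex ℝ ι).of_isClosed_subset (isClosed_bnd I)
    ((bnd_subset_faceSet I).trans (faceSet_subset_stdSimplex I))

/-- The barycenter of the face spanned by `I`. -/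
noncomputable def bary (I : Finset ι) : ι → ℝ := fun i => if i ∈ I then ((I.card : ℝ))⁻¹ else 0

lemma sum_bary {I : Finset ι} (hI : I.Nonempty) : ∑ l, bary I l = 1 := by
  have hcard : (I.card : ℝ) ≠ 0 := by
    simp [Finset.card_eq_zero, hI.ne_empty]
  have : ∑ l, bary I l = ∑ l ∈ I, ((I.card : ℝ))⁻¹ := by
    rw [← Finset.sum_subset I.subset_univ (fun l _ hl => by simp [bary, hl])]
    exact Finset.sum_congr rfl fun l hl => by simp [bary, hl]
  rw [this, Finset.sum_const, nsmul_eq_mul, mul_inv_cancel₀ hcard]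

section Cone

variable {X : Type} [TopologicalSpace X]

/-- The rescaled minimum coordinate over `I`. -/
noncomputable def muF (I : Finset ι) (hI : I.Nonempty) (x : ι → ℝ) : ℝ :=
  I.card * I.inf' hI (fun i => x i)

lemma continuous_muF (I : Finset ι) (hI : I.Nonempty) : Continuous (muF I hI) :=
  continuous_const.mul (Continuous.finset_inf'_apply hI fun i _ => continuous_apply i)

lemma muF_nonneg {I : Finset ι} (hI : I.Nonempty) {x : ι → ℝ} (hx : x ∈ faceSet I) :
    0 ≤ muF I hI x :=
  mul_nonneg (Nat.cast_nonneg _) (Finset.le_inf' hI _ fun i _ => hx.1.1 i)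

lemma muF_le_one {I : Finset ι} (hI : I.Nonempty) {x : ι → ℝ} (hx : x ∈ faceSet I) :
    muF I hI x ≤ 1 := by
  have h1 : I.card • I.inf' hI (fun i => x i) ≤ ∑ i ∈ I, x i :=
    Finset.card_nsmul_le_sum I _ _ (fun i hi => Finset.inf'_le _ hi)
  rw [faceSet_sum_eq_one hx] at h1
  rw [muF]
  calc (I.card : ℝ) * I.inf' hI (fun i => x i) = I.card • I.inf' hI (fun i => x i) := by
        rw [nsmul_eq_mul]
    _ ≤ 1 := h1

lemma muF_eq_zero {I : Finset ι} (hI : I.Nonempty) {x : ι → ℝ} (hx : x ∈ faceSet I)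
    {i : ι} (hi : i ∈ I) (hxi : x i = 0) : muF I hI x = 0 := by
  have h1 : I.inf' hI (fun i => x i) ≤ 0 := hxi ▸ Finset.inf'_le _ hi
  have h2 : 0 ≤ I.inf' hI (fun i => x i) := Finset.le_inf' hI _ fun j _ => hx.1.1 j
  rw [muF, le_antisymm h1 h2, mul_zero]

/-- The radial projection to the boundary (defined when `muF < 1`), with a default vertex
value otherwise. -/
noncomputable def yF (I : Finset ι) (hI : I.Nonempty) (i₀ : ι) (x : ι → ℝ) : ι → ℝ :=
  if muF I hI x < 1 then (1 - muF I hI x)⁻¹ • (x - muF I hI x • bary I)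
  else fun j => if j = i₀ then 1 else 0

lemma vertex_mem_bnd {I : Finset ι} {i₀ i₁ : ι} (h₀ : i₀ ∈ I) (h₁ : i₁ ∈ I) (hne : i₀ ≠ i₁) :
    (fun j => if j = i₀ then (1 : ℝ) else 0) ∈ bnd I := by
  rw [bnd, Set.mem_iUnion₂]
  refine ⟨i₁, h₁, ⟨⟨fun j => by positivity, by simp⟩, fun j hj => ?_⟩⟩
  have : j ≠ i₀ := by
    rintro rfl
    exact hj (Finset.mem_erase.mpr ⟨hne, h₀⟩)
  simp [this]

lemma yF_mem_bnd {I : Finset ι} (hI : I.Nonempty) {i₀ i₁ : ι} (h₀ : i₀ ∈ I) (h₁ : i₁ ∈ I)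
    (hne : i₀ ≠ i₁) {x : ι → ℝ} (hx : x ∈ faceSet I) : yF I hI i₀ x ∈ bnd I := by
  rw [yF]
  by_cases hlt : muF I hI x < 1
  · rw [if_pos hlt]
    set μ := muF I hI x with hμ
    have hcard : (0 : ℝ) < I.card := by
      exact_mod_cast Finset.card_pos.mpr hI
    have hpos : (0 : ℝ) < 1 - μ := by linarith
    obtain ⟨j, hj, hjmin⟩ := Finset.exists_mem_eq_inf' hI (fun i => x i)
    have hminj : μ = I.card * x j := by rw [hμ, muF, ← hjmin]
    rw [bnd, Set.mem_iUnion₂]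
    have hcard' : (I.card : ℝ) ≠ 0 := ne_of_gt hcard
    set ν := I.inf' hI (fun i => x i) with hν
    have hμν : μ = I.card * ν := rfl
    have hbar : ∀ l, l ∈ I → μ * bary I l = ν := by
      intro l hl
      rw [hμν, bary, if_pos hl]
      field_simp
    have hbar' : ∀ l, l ∉ I → bary I l = 0 := by
      intro l hl
      rw [bary, if_neg hl]
    refine ⟨j, hj, ⟨⟨fun l => ?_, ?_⟩, fun l hl => ?_⟩⟩
    · -- nonneg
      simp only [Pi.smul_apply, Pi.sub_apply, smul_eq_mul]
      by_cases hl : l ∈ I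
      · have h1 : ν ≤ x l := Finset.inf'_le _ hl
        rw [hbar l hl]
        have := inv_nonneg.mpr hpos.le
        nlinarith
      · rw [hbar' l hl, hx.2 l hl]
        simp
    · -- sum = 1
      simp only [Pi.smul_apply, Pi.sub_apply, smul_eq_mul]
      rw [← Finset.mul_sum, Finset.sum_sub_distrib, hx.1.2, ← Finset.mul_sum,
        sum_bary hI, mul_one]
      field_simp
    · -- zero outside erase
      simp only [Pi.smul_apply, Pi.sub_apply, smul_eq_mul]
      rw [Finset.mem_erase] at hl
      push_neg at hl
      by_cases hl' : l ∈ I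
      · have hlj : l = j := by
          by_contra hne2
          exact (hl hne2) hl'
        subst hlj
        rw [hbar l hl', hjmin]
        simp
      · rw [hbar' l hl', hx.2 l hl']
        simp
  · rw [if_neg hlt]
    exact vertex_mem_bnd h₀ h₁ hne

lemma yF_of_mu_zero {I : Finset ι} (hI : I.Nonempty) (i₀ : ι) {x : ι → ℝ}
    (h : muF I hI x = 0) : yF I hI i₀ x = x := by
  rw [yF, if_pos (by rw [h]; norm_num), h]
  simp

/-- Cone extension over a single face: a continuous map on the boundary of the face,
with values in a contractible set `S`, extends to a continuous map on the face with
values in `S`, without changing the values on the boundary. -/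
lemma cone_extension {I : Finset ι} (hI2 : 2 ≤ I.card) {S : Set X} (hS : ContractibleSpace S)
    (g : (ι → ℝ) → X) (hgc : ContinuousOn g (bnd I)) (hgS : ∀ x ∈ bnd I, g x ∈ S) :
    ∃ A : (ι → ℝ) → X, ContinuousOn A (faceSet I) ∧ (∀ x ∈ faceSet I, A x ∈ S) ∧
      (∀ x ∈ faceSet I, (∃ i ∈ I, x i = 0) → A x = g x) := by
  classical
  have hI : I.Nonempty := Finset.card_pos.mp (by omega : 0 < I.card)
  obtain ⟨i₀, h₀, i₁, h₁, hne⟩ := Finset.one_lt_card.mp (by omega : 1 < I.card)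
  -- contraction of S
  obtain ⟨c, ⟨H⟩⟩ := id_nullhomotopic S
  -- the restricted boundary map, valued in S
  have hgr : Continuous ((bnd I).restrict g) := continuousOn_iff_continuous_restrict.mp hgc
  let gS : ↥(bnd I) → ↥S := fun z => ⟨g z.1, hgS _ z.2⟩
  have hgSc : Continuous gS := hgr.subtype_mk _
  -- the associated two-variable map
  let Fm : ↥(bnd I) × unitInterval → X := fun z => (H (z.2, gS z.1) : X)
  have hFmc : Continuous Fm :=
    continuous_subtype_val.comp (H.continuous.comp (continuous_snd.prodMk
      (hgSc.comp continuous_fst)))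
  have hFm1 : ∀ z : ↥(bnd I), Fm (z, 1) = c := by
    intro z
    show ((H (1, gS z)) : X) = c
    rw [H.apply_one]
    rfl
  have hFm0 : ∀ z : ↥(bnd I), Fm (z, 0) = g z.1 := by
    intro z
    show ((H (0, gS z)) : X) = g z.1
    rw [H.apply_zero]
    rfl
  -- the clamped parameter
  let ν : (ι → ℝ) → unitInterval := fun x => Set.projIcc 0 1 zero_le_one (muF I hI x)
  have hνc : Continuous ν := continuous_projIcc.comp (continuous_muF I hI)
  have hν1 : ∀ x ∈ faceSet I, muF I hI x = 1 → ν x = 1 := by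
    intro x _ h
    simp only [ν, h]
    exact Set.projIcc_of_mem zero_le_one ⟨zero_le_one, le_refl 1⟩
  have hν0 : ∀ x, muF I hI x = 0 → ν x = 0 := by
    intro x h
    simp only [ν, h]
    exact Set.projIcc_of_mem zero_le_one ⟨le_refl 0, zero_le_one⟩
  -- the extension on the face (as a subtype map)
  let T := faceSet I
  let Ahat : ↥T → X := fun x => Fm (⟨yF I hI i₀ x.1, yF_mem_bnd hI h₀ h₁ hne x.2⟩, ν x.1)
  -- continuity of Ahat
  have hAhatc : Continuous Ahat := by
    rw [continuous_iff_continuousAt]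
    intro x
    by_cases hx1 : muF I hI x.1 = 1
    · -- at the cone point
      have hval : Ahat x = c := by
        simp only [Ahat]
        rw [hν1 x.1 x.2 hx1, hFm1]
      rw [ContinuousAt, hval, tendsto_nhds]
      intro V hVopen hcV
      -- tube lemma
      have hWopen : IsOpen (Fm ⁻¹' V) := hVopen.preimage hFmc
      have : CompactSpace ↥(bnd I) := isCompact_iff_compactSpace.mp (isCompact_bnd I)
      have hsub : (Set.univ : Set ↥(bnd I)) ×ˢ ({1} : Set unitInterval) ⊆ Fm ⁻¹' V := by
        rintro ⟨z1, z2⟩ hz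
        rcases Set.mem_prod.mp hz with ⟨-, hz2⟩
        have hz2' : z2 = 1 := hz2
        show Fm (z1, z2) ∈ V
        rw [hz2', hFm1 z1]
        exact hcV
      obtain ⟨u, v, _, hvopen, hu, hv, huv⟩ :=
        generalized_tube_lemma isCompact_univ isCompact_singleton hWopen hsub
      have hmem : {w : ↥T | ν w.1 ∈ v} ∈ nhds x := by
        refine (hvopen.preimage (hνc.comp continuous_subtype_val)).mem_nhds ?_
        show ν x.1 ∈ v
        rw [hν1 x.1 x.2 hx1]
        exact hv rfl
      filter_upwards [hmem] with w hw
      exact huv (Set.mk_mem_prod (hu (Set.mem_univ _)) hw)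
    · -- away from the cone point
      have hUopen : IsOpen {w : ↥T | muF I hI w.1 ≠ 1} :=
        isOpen_compl_iff.mpr (isClosed_eq ((continuous_muF I hI).comp continuous_subtype_val)
          continuous_const)
      refine ContinuousOn.continuousAt ?_ (hUopen.mem_nhds hx1)
      -- on this set, yF is given by the smooth formula
      have hyc : ContinuousOn (fun w : ↥T => yF I hI i₀ w.1) {w : ↥T | muF I hI w.1 ≠ 1} := by
        have hform : ContinuousOn
            (fun w : ↥T => (1 - muF I hI w.1)⁻¹ • (w.1 - muF I hI w.1 • bary I))
            {w : ↥T | muF I hI w.1 ≠ 1} := by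
          have hμc : Continuous fun w : ↥T => muF I hI w.1 :=
            (continuous_muF I hI).comp continuous_subtype_val
          refine ContinuousOn.smul (f := fun w : ↥T => (1 - muF I hI w.1)⁻¹)
            (g := fun w : ↥T => w.1 - muF I hI w.1 • bary I) ?_ ?_
          · exact ContinuousOn.inv₀ (continuous_const.sub hμc).continuousOn (fun w hw => by
              simp only [Set.mem_setOf_eq] at hw
              intro hc
              exact hw (by linarith [sub_eq_zero.mp hc]))
          · exact (continuous_subtype_val.sub (hμc.smul continuous_const)).continuousOn
        refine hform.congr fun w hw => ?_
        simp only [Set.mem_setOf_eq] at hw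
        rw [yF, if_pos (lt_of_le_of_ne (muF_le_one hI w.2) hw)]
      rw [continuousOn_iff_continuous_restrict]
      have h1 : Continuous ({w : ↥T | muF I hI w.1 ≠ 1}.restrict fun w : ↥T => yF I hI i₀ w.1) :=
        continuousOn_iff_continuous_restrict.mp hyc
      exact hFmc.comp ((h1.subtype_mk _).prodMk
        (hνc.comp (continuous_subtype_val.comp continuous_subtype_val)))
  -- assemble the extension
  refine ⟨fun x => if hx : x ∈ T then Ahat ⟨x, hx⟩ else g x, ?_, ?_, ?_⟩
  · rw [continuousOn_iff_continuous_restrict]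
    convert hAhatc using 1
    funext w
    simp only [Set.restrict_apply, dif_pos w.2]
    exact dif_pos w.2
  · intro x hx
    show (if hx' : x ∈ T then Ahat ⟨x, hx'⟩ else g x) ∈ S
    rw [dif_pos hx]
    exact (H (_, gS _)).2
  · intro x hx ⟨i, hiI, hxi⟩
    show (if hx' : x ∈ T then Ahat ⟨x, hx'⟩ else g x) = g x
    rw [dif_pos hx]
    have hμ0 : muF I hI x = 0 := muF_eq_zero hI hx hiI hxi
    have hy : yF I hI i₀ x = x := yF_of_mu_zero hI i₀ hμ0
    simp only [Ahat]
    have : (⟨yF I hI i₀ x, yF_mem_bnd hI h₀ h₁ hne hx⟩ : ↥(bnd I)) =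
        ⟨x, hy ▸ yF_mem_bnd hI h₀ h₁ hne hx⟩ := Subtype.ext hy
    rw [this, hν0 x hμ0, hFm0]

/-- The `k`-skeleton of the standard simplex. -/
def skel (k : ℕ) : Set (ι → ℝ) := {x | x ∈ stdSimplex ℝ ι ∧ (suppF x).card ≤ k}

lemma faceSet_subset_skel {I : Finset ι} {k : ℕ} (h : I.card ≤ k) : faceSet I ⊆ skel k := by
  intro x hx
  rw [mem_faceSet_iff] at hx
  exact ⟨hx.1, le_trans (Finset.card_le_card hx.2) h⟩

lemma bnd_subset_skel {I : Finset ι} {k : ℕ} (h : I.card = k + 1) : bnd I ⊆ skel k := by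
  intro x hx
  rw [bnd, Set.mem_iUnion₂] at hx
  obtain ⟨i, hi, hxf⟩ := hx
  exact faceSet_subset_skel (by rw [Finset.card_erase_of_mem hi, h]; omega) hxf

lemma skel_eq_biUnion {k : ℕ} (hk : k ≤ Fintype.card ι) :
    skel k = ⋃ I ∈ Finset.powersetCard k (Finset.univ : Finset ι), faceSet I := by
  ext x
  constructor
  · intro hx
    obtain ⟨hxs, hxc⟩ := hx
    obtain ⟨I, hsub, hcard⟩ := Finset.exists_superset_card_eq hxc hk
    rw [Set.mem_iUnion₂]
    exact ⟨I, Finset.mem_powersetCard.mpr ⟨I.subset_univ, hcard⟩,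
      mem_faceSet_iff.mpr ⟨hxs, hsub⟩⟩
  · intro hx
    rw [Set.mem_iUnion₂] at hx
    obtain ⟨I, hI, hxf⟩ := hx
    exact faceSet_subset_skel (le_of_eq (Finset.mem_powersetCard.mp hI).2) hxf

section Steps

variable {X : Type} [TopologicalSpace X]

lemma Pmono_trans (P : Finset ι → Set X)
    (hPmono : ∀ I : Finset ι, ∀ i ∈ I, (I.erase i).Nonempty → P (I.erase i) ⊆ P I) :
    ∀ J I : Finset ι, J.Nonempty → J ⊆ I → P J ⊆ P I := by
  have key : ∀ N : ℕ, ∀ J I : Finset ι, I.card ≤ N → J.Nonempty → J ⊆ I → P J ⊆ P I := by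
    intro N
    induction N with
    | zero =>
      intro J I hcard hJ hsub
      have hIe : I = ∅ := Finset.card_eq_zero.mp (Nat.le_zero.mp hcard)
      subst hIe
      rw [Finset.subset_empty.mp hsub] at hJ
      exact absurd hJ (by simp)
    | succ N ih =>
      intro J I hcard hJ hsub
      by_cases h : J = I
      · subst h
        exact subset_refl _
      · obtain ⟨i, hiI, hiJ⟩ := Finset.exists_of_ssubset (Finset.ssubset_iff_subset_ne.mpr ⟨hsub, h⟩)
        have hsub' : J ⊆ I.erase i := Finset.subset_erase.mpr ⟨hsub, hiJ⟩
        have h1 := ih J (I.erase i) (by rw [Finset.card_erase_of_mem hiI]; omega) hJ hsub'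
        exact h1.trans (hPmono I i hiI ⟨hJ.choose, hsub' hJ.choose_spec⟩)
  intro J I hJ hsub
  exact key I.card J I le_rfl hJ hsub

/-- The inductive step: extending a map over the next skeleton. -/
lemma step_extension (P : Finset ι → Set X)
    (hPcontr : ∀ I : Finset ι, I.Nonempty → ContractibleSpace (P I))
    (hPmono' : ∀ J I : Finset ι, J.Nonempty → J ⊆ I → P J ⊆ P I)
    (k : ℕ) (hk : 1 ≤ k) (hkm : k + 1 ≤ Fintype.card ι)
    (g : (ι → ℝ) → X) (hgc : ContinuousOn g (skel k))
    (hgP : ∀ J : Finset ι, J.Nonempty → J.card ≤ k → ∀ x ∈ faceSet J, g x ∈ P J) :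
    ∃ G : (ι → ℝ) → X, ContinuousOn G (skel (k + 1)) ∧
      ∀ J : Finset ι, J.Nonempty → J.card ≤ k + 1 → ∀ x ∈ faceSet J, G x ∈ P J := by
  classical
  have key : ∀ I : Finset ι, ∃ A : (ι → ℝ) → X, I.card = k + 1 →
      ContinuousOn A (faceSet I) ∧ (∀ x ∈ faceSet I, A x ∈ P I) ∧
        ∀ x ∈ faceSet I, (∃ i ∈ I, x i = 0) → A x = g x := by
    intro I
    by_cases hI : I.card = k + 1
    · have hI2 : 2 ≤ I.card := by omega
      have hgc' : ContinuousOn g (bnd I) := hgc.mono (bnd_subset_skel hI)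
      have hgS : ∀ x ∈ bnd I, g x ∈ P I := by
        intro x hx
        rw [bnd, Set.mem_iUnion₂] at hx
        obtain ⟨i, hi, hxf⟩ := hx
        have hec : (I.erase i).card = k := by rw [Finset.card_erase_of_mem hi, hI]; omega
        have herase : (I.erase i).Nonempty := Finset.card_pos.mp (by omega)
        exact hPmono' _ _ herase (Finset.erase_subset i I)
          (hgP _ herase (le_of_eq hec) x hxf)
      obtain ⟨A, h1, h2, h3⟩ := cone_extension hI2
        (hPcontr I (Finset.card_pos.mp (by omega))) g hgc' hgS
      exact ⟨A, fun _ => ⟨h1, h2, h3⟩⟩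
    · exact ⟨g, fun h => absurd h hI⟩
  choose A hA using key
  refine ⟨fun x => if (suppF x).card ≤ k then g x else A (suppF x) x, ?_, ?_⟩
  · -- continuity
    have hface : ∀ I : Finset ι, I.card = k + 1 → ∀ x ∈ faceSet I,
        (if (suppF x).card ≤ k then g x else A (suppF x) x) = A I x := by
      intro I hI x hx
      have hsub : suppF x ⊆ I := (mem_faceSet_iff.mp hx).2
      by_cases hs : (suppF x).card ≤ k
      · rw [if_pos hs]
        refine ((hA I hI).2.2 x hx ?_).symm
        have hne : suppF x ≠ I := fun h => by rw [h] at hs; omega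
        obtain ⟨i, hiI, hiS⟩ :=
          Finset.exists_of_ssubset (Finset.ssubset_iff_subset_ne.mpr ⟨hsub, hne⟩)
        exact ⟨i, hiI, by rwa [mem_suppF, not_not] at hiS⟩
      · have hsI : suppF x = I := Finset.eq_of_subset_of_card_le hsub (by omega)
        rw [if_neg hs, hsI]
    rw [skel_eq_biUnion hkm]
    refine continuousOn_finset_biUnion _ _ _ (fun I _ => isClosed_faceSet I) ?_
    intro I hImem
    have hI : I.card = k + 1 := (Finset.mem_powersetCard.mp hImem).2
    exact ((hA I hI).1).congr (hface I hI)
  · -- membership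
    intro J hJne hJcard x hx
    have hsub : suppF x ⊆ J := (mem_faceSet_iff.mp hx).2
    have hsne : (suppF x).Nonempty := suppF_nonempty hx.1
    by_cases hs : (suppF x).card ≤ k
    · simp only [if_pos hs]
      exact hPmono' _ _ hsne hsub (hgP _ hsne hs _ (mem_faceSet_suppF hx.1))
    · have hcard1 : (suppF x).card = k + 1 := by
        have := Finset.card_le_card hsub
        omega
      have hsJ : suppF x = J := Finset.eq_of_subset_of_card_le hsub (by omega)
      have hJc : J.card = k + 1 := hsJ ▸ hcard1
      simp only [hsJ, if_neg (show ¬ J.card ≤ k by omega)]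
      exact (hA J hJc).2.1 x hx

end Steps

/-- The base case: a map on the `1`-skeleton (the vertices). -/
lemma base_extension [Nonempty ι] {X : Type} [TopologicalSpace X] (P : Finset ι → Set X)
    (hPne : ∀ I : Finset ι, I.Nonempty → (P I).Nonempty) :
    ∃ g : (ι → ℝ) → X, ContinuousOn g (skel 1) ∧
      ∀ J : Finset ι, J.Nonempty → J.card ≤ 1 → ∀ x ∈ faceSet J, g x ∈ P J := by
  classical
  have hune : (Finset.univ : Finset ι).Nonempty := Finset.univ_nonempty
  refine ⟨fun x => if h : (suppF x).Nonempty then (hPne _ h).choose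
    else (hPne _ hune).choose, ?_, ?_⟩
  · -- `skel 1` is a finite set
    have hfin : (skel 1 : Set (ι → ℝ)).Finite := by
      refine Set.Finite.subset (Set.finite_range fun i : ι => fun j => if j = i then (1 : ℝ) else 0) ?_
      intro x hx
      obtain ⟨hxs, hxc⟩ := hx
      obtain ⟨i, hi⟩ := Finset.card_eq_one.mp
        (le_antisymm hxc (Finset.card_pos.mpr (suppF_nonempty hxs)))
      have hzero : ∀ j, j ≠ i → x j = 0 := by
        intro j hj
        by_contra hxj
        have : j ∈ suppF x := mem_suppF.mpr hxj
        rw [hi, Finset.mem_singleton] at this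
        exact hj this
      have hone : x i = 1 := by
        have := hxs.2
        rwa [Finset.sum_eq_single_of_mem i (Finset.mem_univ i)
          (fun j _ hj => hzero j hj)] at this
      refine ⟨i, ?_⟩
      funext j
      by_cases hj : j = i
      · subst hj; simp [hone]
      · simp [hj, hzero j hj]
    exact continuousOn_of_finite hfin
  · intro J hJne hJcard x hx
    have hsub : suppF x ⊆ J := (mem_faceSet_iff.mp hx).2
    have hsne : (suppF x).Nonempty := suppF_nonempty hx.1
    have hsJ : suppF x = J := Finset.eq_of_subset_of_card_le hsub
      (le_trans hJcard (Finset.card_pos.mpr hsne))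
    simp only [dif_pos hsne]
    have hmem := (hPne _ hsne).choose_spec
    have hPeq : P (suppF x) = P J := by rw [hsJ]
    exact hPeq ▸ hmem

/-- Construction of a map from the standard `(n+1)`-simplex into a space `X`,
sending the face `Δ_I` spanned by the vertices in `I` into a prescribed set `P I`,
given that the sets `P I` are nonempty, contractible, monotone along faces, and
`P` of the full index set is all of `X`. -/
theorem exists_map_of_faces_into_contractible_family (n : ℕ) (hn : 1 ≤ n)
    {X : Type} [TopologicalSpace X]
    (P : Finset (Fin (n + 2)) → Set X)
    (hPuniv : P Finset.univ = Set.univ)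
    (hPne : ∀ I : Finset (Fin (n + 2)), I.Nonempty → (P I).Nonempty)
    (hPcontr : ∀ I : Finset (Fin (n + 2)), I.Nonempty → ContractibleSpace (P I))
    (hPmono : ∀ I : Finset (Fin (n + 2)), ∀ i ∈ I, (I.erase i).Nonempty →
      P (I.erase i) ⊆ P I) :
    ∃ f : stdSimplex ℝ (Fin (n + 2)) → X, Continuous f ∧
      ∀ I : Finset (Fin (n + 2)), I.Nonempty →
        f '' {x : stdSimplex ℝ (Fin (n + 2)) |
          ∀ i ∉ I, (x : Fin (n + 2) → ℝ) i = 0} ⊆ P I := by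
  classical
  have hPmono' := Pmono_trans P hPmono
  have hcard : Fintype.card (Fin (n + 2)) = n + 2 := Fintype.card_fin _
  have main : ∀ k : ℕ, 1 ≤ k → k ≤ n + 2 →
      ∃ g : (Fin (n + 2) → ℝ) → X, ContinuousOn g (skel k) ∧
        ∀ J : Finset (Fin (n + 2)), J.Nonempty → J.card ≤ k → ∀ x ∈ faceSet J, g x ∈ P J := by
    intro k hk1
    induction k, hk1 using Nat.le_induction with
    | base => intro _; exact base_extension P hPne
    | succ k hk ih =>
      intro hk2
      obtain ⟨g, hgc, hgP⟩ := ih (by omega)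
      exact step_extension P hPcontr hPmono' k hk (by omega) g hgc hgP
  obtain ⟨g, hgc, hgP⟩ := main (n + 2) (by omega) le_rfl
  refine ⟨fun x => g x.1, ?_, ?_⟩
  · refine hgc.comp_continuous continuous_subtype_val fun x => ?_
    exact ⟨x.2, le_trans (Finset.card_le_univ _) (le_of_eq hcard)⟩
  · rintro I hI y ⟨x, hx, rfl⟩
    refine hgP I hI (le_trans (Finset.card_le_univ _) (le_of_eq hcard)) x.1
      ⟨x.2, fun i hi => hx i hi⟩
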